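/- For the 7-dimensional Lie algebra above, α7 ∧ (dα7)^3 is a non-zero multiple of α1∧α2∧α3∧α4∧α5∧α6∧α7; hence α7 is a (linear) contact form. -/

import Mathlib

set_option synthInstance.maxHeartbeats 1000000
set_option maxHeartbeats 1000000
set_option maxRecDepth 4000

/-- The dual basis 1-forms `α1,…,α7` of the 7-dimensional Lie algebra, viewed in the
exterior algebra `Λ g*`. -/
noncomputable def a7 (i : Fin 7) : ExteriorAlgebra ℝ (Module.Dual ℝ (Fin 7 → ℝ)) :=
  ExteriorAlgebra.ι ℝ (LinearMap.proj i)

/-- `dα7 = -α1∧α4 - α2∧α3 - α5∧α6`. -/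
noncomputable def da7 : ExteriorAlgebra ℝ (Module.Dual ℝ (Fin 7 → ℝ)) :=
  -(a7 0 * a7 3) - a7 1 * a7 2 - a7 4 * a7 5

lemma a7_sq (i : Fin 7) : a7 i * a7 i = 0 := ExteriorAlgebra.ι_sq_zero _

lemma a7_sq' (i : Fin 7) (c : ExteriorAlgebra ℝ (Module.Dual ℝ (Fin 7 → ℝ))) :
    a7 i * (a7 i * c) = 0 := by rw [← mul_assoc, a7_sq, zero_mul]

lemma a7_swap (i j : Fin 7) (_h : j < i) : a7 i * a7 j = -(a7 j * a7 i) := by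
  have := ExteriorAlgebra.ι_add_mul_swap (R := ℝ)
    (LinearMap.proj (R := ℝ) (φ := fun _ : Fin 7 => ℝ) i) (LinearMap.proj j)
  unfold a7
  linear_combination (norm := noncomm_ring) this

lemma a7_swap' (i j : Fin 7) (h : j < i) (c : ExteriorAlgebra ℝ (Module.Dual ℝ (Fin 7 → ℝ))) :
    a7 i * (a7 j * c) = -(a7 j * (a7 i * c)) := by
  rw [← mul_assoc, a7_swap i j h, ← mul_assoc, neg_mul]

lemma key7 :
    a7 6 * da7 * da7 * da7
      = (-6 : ℝ) • (a7 0 * a7 1 * a7 2 * a7 3 * a7 4 * a7 5 * a7 6) := by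
  simp only [da7, sub_eq_add_neg, mul_add, add_mul, mul_neg, neg_mul, neg_neg, mul_assoc]
  simp (config := { decide := true }) only [a7_sq', a7_swap', a7_sq, a7_swap, mul_neg, neg_neg,
    mul_zero, neg_zero, add_zero, zero_add]
  module

noncomputable def ev7 : Module.Dual ℝ (Fin 7 → ℝ) →ₗ[ℝ] (Fin 7 → ℝ) :=
  LinearMap.pi fun j => LinearMap.applyₗ (Pi.single j 1)

noncomputable def F7 : (Module.Dual ℝ (Fin 7 → ℝ)) [⋀^Fin 7]→ₗ[ℝ] ℝ :=
  (Matrix.detRowAlternating : (Fin 7 → ℝ) [⋀^Fin 7]→ₗ[ℝ] ℝ).compLinearMap ev7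

noncomputable def fam7 : ∀ i : ℕ, (Module.Dual ℝ (Fin 7 → ℝ)) [⋀^Fin i]→ₗ[ℝ] ℝ :=
  fun i => match i with
  | 7 => F7
  | _ => 0

lemma prod_eq_iMulti : a7 0 * a7 1 * a7 2 * a7 3 * a7 4 * a7 5 * a7 6
    = ExteriorAlgebra.ιMulti ℝ 7 (fun i => LinearMap.proj i) := by
  simp only [mul_assoc]
  simp [ExteriorAlgebra.ιMulti_apply, List.ofFn_succ, a7]
  rfl

lemma lift_eval : ExteriorAlgebra.liftAlternating fam7
    (ExteriorAlgebra.ιMulti ℝ 7 (fun i : Fin 7 => LinearMap.proj i)) = 1 := by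
  rw [ExteriorAlgebra.liftAlternating_apply_ιMulti]
  show F7 _ = 1
  unfold F7
  simp only [AlternatingMap.compLinearMap_apply]
  have h1 : (fun i : Fin 7 => ev7 (LinearMap.proj i)) = (1 : Matrix (Fin 7) (Fin 7) ℝ) := by
    funext i j
    simp [ev7, Matrix.one_apply, Pi.single_apply, eq_comm]
  rw [h1]
  rw [← Matrix.det]; exact Matrix.det_one

lemma prod_ne_zero : a7 0 * a7 1 * a7 2 * a7 3 * a7 4 * a7 5 * a7 6 ≠ 0 := by
  intro h
  have h2 := lift_eval
  rw [← prod_eq_iMulti, h, map_zero] at h2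
  exact one_ne_zero (α := ℝ) h2.symm

/-- `α7 ∧ (dα7)³` is a non-zero multiple of `α1∧α2∧α3∧α4∧α5∧α6∧α7`; in particular it is
non-zero and `α7` is a linear contact form. -/
theorem stmt13 :
    (∃ c : ℝ, c ≠ 0 ∧
      a7 6 * da7 * da7 * da7 = c • (a7 0 * a7 1 * a7 2 * a7 3 * a7 4 * a7 5 * a7 6)) ∧
    a7 6 * da7 * da7 * da7 ≠ 0 := by
  refine ⟨⟨-6, by norm_num, key7⟩, ?_⟩
  rw [key7]
  exact smul_ne_zero (by norm_num) prod_ne_zero
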